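/- Let G be a finite group and X a finite set. Consider pairs (r, f) where r ∈ ℕ and f : X × G → Fin r × G is a G-equivariant surjection (for the right-translation G-actions); declare (r,f) equivalent to (r',f') if r = r' and f' = σ ∘ f for some G-equivariant bijection σ of Fin r × G. Then the set of equivalence classes of such pairs is in bijection with the disjoint union, over all set partitions P of X, of the quotients G^X/∼_P, where for λ, λ' ∈ G^X one has λ ∼_P λ' iff for every part B of P there exists t ∈ G with λ_x = t λ'_x for all x ∈ B. -/

import Mathlib

/-!
Statement 18: for a finite group `G` and finite set `X`, the set of equivalence classes
of pairs `(r, f)`, where `f : X × G → Fin r × G` is a `G`-equivariant surjection (for the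
right-translation actions) and `(r, f) ∼ (r, σ ∘ f)` for `G`-equivariant bijections `σ`
of `Fin r × G`, is in bijection with the disjoint union, over all set partitions `P` of
`X` (encoded as `Setoid`s), of the quotients `G^X/∼_P`, where `λ ∼_P λ'` iff on every
part of `P` there is `t ∈ G` with `λ = t λ'`.
-/

namespace GPC

variable (G : Type*) [Group G] (X : Type*)

/-- A map `f : X × G → Fin r × G` (or `Fin r × G → Fin r × G`) is `G`-equivariant for
the right-translation actions if it commutes with `(x, h) ↦ (x, h g⁻¹)`. -/
def IsEquivariant {r : ℕ} (f : X × G → Fin r × G) : Prop :=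
  ∀ (g : G) (y : X × G), f (y.1, y.2 * g⁻¹) = ((f y).1, (f y).2 * g⁻¹)

/-- A permutation `σ` of `Fin r × G` is `G`-equivariant if it commutes with the
right-translation action. -/
def IsEquivariantPerm {r : ℕ} (σ : Equiv.Perm (Fin r × G)) : Prop :=
  ∀ (g : G) (y : Fin r × G), σ (y.1, y.2 * g⁻¹) = ((σ y).1, (σ y).2 * g⁻¹)

/-- The `G`-equivariant surjections `X × G → Fin r × G`. -/
def EquivSurj (r : ℕ) : Type _ :=
  {f : X × G → Fin r × G // Function.Surjective f ∧ IsEquivariant G X f}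

/-- Two equivariant surjections are equivalent iff they differ by a `G`-equivariant
bijection of `Fin r × G`. -/
def esSetoid (r : ℕ) : Setoid (EquivSurj G X r) where
  r f f' := ∃ σ : Equiv.Perm (Fin r × G),
    IsEquivariantPerm G σ ∧ f'.val = ⇑σ ∘ f.val
  iseqv := by
    constructor
    · intro f
      exact ⟨Equiv.refl _, fun g y => rfl, rfl⟩
    · rintro f f' ⟨σ, hσ, hf⟩
      refine ⟨σ.symm, ?_, ?_⟩
      · intro g y
        apply σ.injective
        rw [Equiv.apply_symm_apply, hσ, Equiv.apply_symm_apply]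
      · rw [hf]
        funext y
        simp
    · rintro f f' f'' ⟨σ, hσ, hf⟩ ⟨τ, hτ, hf'⟩
      refine ⟨σ.trans τ, ?_, ?_⟩
      · intro g y
        simp only [Equiv.trans_apply, hσ g y, hτ g (σ y)]
      · rw [hf', hf]
        rfl

/-- The labelling equivalence `∼_P` on `G^X` attached to a set partition `P` of `X`
(encoded as a `Setoid`): `λ ∼_P λ'` iff for every part there is `t ∈ G` with
`λ = t * λ'` on that part. -/
def labelSetoid (P : Setoid X) : Setoid (X → G) where
  r lam lam' := ∀ x : X, ∃ t : G, ∀ y : X, P x y → lam y = t * lam' y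
  iseqv := by
    constructor
    · intro lam x
      exact ⟨1, fun y _ => (one_mul _).symm⟩
    · intro lam lam' h x
      obtain ⟨t, ht⟩ := h x
      exact ⟨t⁻¹, fun y hy => by rw [ht y hy, inv_mul_cancel_left]⟩
    · intro lam lam' lam'' h h' x
      obtain ⟨t, ht⟩ := h x
      obtain ⟨t', ht'⟩ := h' x
      exact ⟨t * t', fun y hy => by rw [ht y hy, ht' y hy, mul_assoc]⟩

section Aux

variable {G X}

/-- The `Fin r`-component of an equivariant surjection at the basepoint. -/
def idx {r : ℕ} (f : EquivSurj G X r) : X → Fin r := fun x => (f.1 (x, 1)).1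

/-- The `G`-component of an equivariant surjection at the basepoint. -/
def lab {r : ℕ} (f : EquivSurj G X r) : X → G := fun x => (f.1 (x, 1)).2

lemma apply_eq {r : ℕ} (f : EquivSurj G X r) (x : X) (h : G) :
    f.1 (x, h) = (idx f x, lab f x * h) := by
  have := f.2.2 h⁻¹ (x, 1)
  simpa [idx, lab] using this

lemma perm_apply_eq {r : ℕ} (σ : Equiv.Perm (Fin r × G)) (hσ : IsEquivariantPerm G σ)
    (j : Fin r) (h : G) : σ (j, h) = ((σ (j, 1)).1, (σ (j, 1)).2 * h) := by
  have := hσ h⁻¹ (j, 1)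
  simpa using this

lemma idx_surj {r : ℕ} (f : EquivSurj G X r) : Function.Surjective (idx f) := by
  intro j
  obtain ⟨⟨x, h⟩, hx⟩ := f.2.1 (j, (1 : G))
  rw [apply_eq] at hx
  exact ⟨x, (Prod.ext_iff.mp hx).1⟩

/-- The invariant attached to an equivariant surjection. -/
def F {r : ℕ} (f : EquivSurj G X r) : Σ P : Setoid X, Quotient (labelSetoid G X P) :=
  ⟨Setoid.ker (idx f), Quotient.mk _ (lab f)⟩

lemma sigmaLabel_eq {P P' : Setoid X} (h : P = P') {a b : X → G}
    (hab : (labelSetoid G X P).r a b) :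
    (⟨P, Quotient.mk _ a⟩ : Σ Q : Setoid X, Quotient (labelSetoid G X Q)) =
      ⟨P', Quotient.mk _ b⟩ := by
  subst h
  exact congrArg _ (Quotient.sound hab)

lemma label_rel_of_sigma_eq {P P' : Setoid X} {a b : X → G}
    (h : (⟨P, Quotient.mk _ a⟩ : Σ Q : Setoid X, Quotient (labelSetoid G X Q)) =
      ⟨P', Quotient.mk _ b⟩) :
    (labelSetoid G X P).r a b := by
  obtain ⟨h1, h2⟩ := Sigma.mk.inj_iff.mp h
  subst h1
  exact Quotient.exact (eq_of_heq h2)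

lemma F_compat {r : ℕ} (f f' : EquivSurj G X r) (h : (esSetoid G X r).r f f') :
    F f = F f' := by
  obtain ⟨σ, hσ, hff'⟩ := h
  set π : Fin r → Fin r := fun j => (σ (j, 1)).1 with hπdef
  set t : Fin r → G := fun j => (σ (j, 1)).2 with htdef
  have hσ' : ∀ (j : Fin r) (h : G), σ (j, h) = (π j, t j * h) := fun j h =>
    perm_apply_eq σ hσ j h
  have happ : ∀ x : X, f'.1 (x, 1) = σ (f.1 (x, 1)) := fun x => congrFun hff' (x, 1)
  have hidx : ∀ x, idx f' x = π (idx f x) := by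
    intro x
    have : f'.1 (x, 1) = σ (idx f x, lab f x * 1) := by rw [happ, apply_eq]
    rw [hσ'] at this
    exact (Prod.ext_iff.mp this).1
  have hlab : ∀ x, lab f' x = t (idx f x) * lab f x := by
    intro x
    have : f'.1 (x, 1) = σ (idx f x, lab f x * 1) := by rw [happ, apply_eq]
    rw [hσ'] at this
    have := (Prod.ext_iff.mp this).2
    simpa [lab] using this
  have hπ : Function.Injective π := by
    intro j k hjk
    have h2 : σ (j, 1) = σ (k, (t k)⁻¹ * t j) := by
      rw [hσ', hσ', hjk]
      simp
    exact (Prod.ext_iff.mp (σ.injective h2)).1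
  have hker : Setoid.ker (idx f) = Setoid.ker (idx f') := by
    apply Setoid.ext
    intro x y
    show idx f x = idx f y ↔ idx f' x = idx f' y
    rw [hidx, hidx]
    exact ⟨fun h => congrArg π h, fun h => hπ h⟩
  refine sigmaLabel_eq hker ?_
  intro x
  refine ⟨(t (idx f x))⁻¹, fun y hy => ?_⟩
  have hy' : idx f y = idx f x := (show idx f x = idx f y from hy).symm
  rw [hlab y, hy', inv_mul_cancel_left]

/-- The classifying map. -/
def Phi : (Σ r : ℕ, Quotient (esSetoid G X r)) →
    Σ P : Setoid X, Quotient (labelSetoid G X P) :=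
  fun a => Quotient.lift F (fun f f' h => F_compat f f' h) a.2

end Aux

theorem subobject_classification (G : Type*) [Group G] [Fintype G]
    (X : Type*) [Fintype X] :
    Nonempty ((Σ r : ℕ, Quotient (esSetoid G X r))
      ≃ (Σ P : Setoid X, Quotient (labelSetoid G X P))) := by
  refine ⟨Equiv.ofBijective Phi ⟨?_, ?_⟩⟩
  · -- injectivity
    rintro ⟨r, qa⟩ ⟨s, qb⟩ h
    induction qa using Quotient.inductionOn with | h f => ?_
    induction qb using Quotient.inductionOn with | h f' => ?_
    change F f = F f' at h
    have h1 : Setoid.ker (idx f) = Setoid.ker (idx f') := congrArg Sigma.fst h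
    have hrel : (labelSetoid G X (Setoid.ker (idx f))).r (lab f) (lab f') :=
      label_rel_of_sigma_eq h
    have hk : ∀ x y : X, idx f x = idx f y ↔ idx f' x = idx f' y := by
      intro x y
      exact Iff.of_eq (congrFun (congrFun (congrArg (fun s : Setoid X => s.r) h1) x) y)
    -- r = s
    have hrs : r = s := by
      have c1 : Nat.card (Quotient (Setoid.ker (idx f))) = r := by
        have := Nat.card_congr (Setoid.quotientKerEquivOfSurjective (idx f) (idx_surj f))
        simpa using this
      have c2 : Nat.card (Quotient (Setoid.ker (idx f'))) = s := by
        have := Nat.card_congr (Setoid.quotientKerEquivOfSurjective (idx f') (idx_surj f'))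
        simpa using this
      rw [← c1, ← c2, h1]
    subst hrs
    -- construct the permutation
    have hrep : ∀ j : Fin r, idx f (Classical.choose (idx_surj f j)) = j := fun j =>
      Classical.choose_spec (idx_surj f j)
    set rep : Fin r → X := fun j => Classical.choose (idx_surj f j) with hrepdef
    set π : Fin r → Fin r := fun j => idx f' (rep j) with hπdef
    have hπ : ∀ x : X, π (idx f x) = idx f' x := by
      intro x
      exact (hk (rep (idx f x)) x).mp (hrep (idx f x))
    have hπinj : Function.Injective π := by
      intro j k hjk
      have : idx f (rep j) = idx f (rep k) := (hk _ _).mpr hjk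
      rw [hrep, hrep] at this
      exact this
    have hπsurj : Function.Surjective π := by
      intro k
      obtain ⟨x, hx⟩ := idx_surj f' k
      exact ⟨idx f x, by rw [hπ, hx]⟩
    set πe : Fin r ≃ Fin r := Equiv.ofBijective π ⟨hπinj, hπsurj⟩ with hπe
    set t : Fin r → G := fun j => (Classical.choose (hrel (rep j)))⁻¹ with htdef
    have hlab : ∀ x : X, lab f' x = t (idx f x) * lab f x := by
      intro x
      have hspec := Classical.choose_spec (hrel (rep (idx f x)))
      have hrelx : (Setoid.ker (idx f)).r (rep (idx f x)) x := hrep (idx f x)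
      have := hspec x hrelx
      rw [this, htdef]
      simp [mul_assoc]
    refine congrArg _ (Quotient.sound ?_)
    refine ⟨⟨fun y => (πe y.1, t y.1 * y.2), fun y => (πe.symm y.1, (t (πe.symm y.1))⁻¹ * y.2),
      ?_, ?_⟩, ?_, ?_⟩
    · intro y; simp
    · intro y; simp
    · intro g y
      simp [mul_assoc]
    · funext y
      obtain ⟨x, h⟩ := y
      simp only [Function.comp_apply]
      rw [apply_eq f', apply_eq f]
      simp only [Equiv.coe_fn_mk]
      rw [hlab x, ← hπ x]
      show (π (idx f x), t (idx f x) * lab f x * h) = (πe (idx f x), t (idx f x) * (lab f x * h))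
      rw [mul_assoc]
      rfl
  · -- surjectivity
    rintro ⟨P, q⟩
    induction q using Quotient.inductionOn with | h lam => ?_
    set r : ℕ := Nat.card (Quotient P) with hr
    set e : Quotient P ≃ Fin r := Finite.equivFin (Quotient P) with he
    have hsurj : Function.Surjective
        (fun y : X × G => ((e (Quotient.mk P y.1), lam y.1 * y.2) : Fin r × G)) := by
      rintro ⟨j, g⟩
      refine ⟨((e.symm j).out, (lam (e.symm j).out)⁻¹ * g), ?_⟩
      simp [Quotient.out_eq]
    have hequiv : IsEquivariant G X
        (fun y : X × G => ((e (Quotient.mk P y.1), lam y.1 * y.2) : Fin r × G)) := by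
      intro g y
      simp [mul_assoc]
    set f₀ : EquivSurj G X r :=
      ⟨fun y => (e (Quotient.mk P y.1), lam y.1 * y.2), hsurj, hequiv⟩ with hf₀
    refine ⟨⟨r, Quotient.mk _ f₀⟩, ?_⟩
    show F f₀ = _
    have hker : Setoid.ker (idx f₀) = P := by
      apply Setoid.ext
      intro x y
      show e (Quotient.mk P x) = e (Quotient.mk P y) ↔ _
      rw [EmbeddingLike.apply_eq_iff_eq]
      exact Quotient.eq
    refine sigmaLabel_eq hker ?_
    intro x
    refine ⟨1, fun y _ => ?_⟩
    show lam y * 1 = 1 * lam y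
    simp

end GPC
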